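/- Let I be an ideal of the Laurent polynomial ring over a field K, and let V(I) ⊆ (K*)^d be its zero set. If w ∈ ℝ^d is such that the initial ideal init_w(I) contains a monomial, then for every common zero ζ of I with coordinates in the nonzero generalized Puiseux series over K, val(ζ) ≠ w. (One direction of the Fundamental Theorem of Tropical Geometry: valuations of Puiseux-series points of V(I) lie in the tropical variety T(I).) -/

import Mathlib

open scoped Classical

/-- Identify an element of the Laurent polynomial ring `AddMonoidAlgebra K (Fin d → ℤ)`
with its underlying finitely supported function. -/
def AMAtoF {K : Type*} [Field K] {d : ℕ} (f : AddMonoidAlgebra K (Fin d → ℤ)) :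
    (Fin d → ℤ) →₀ K := f.coeff

noncomputable def pairZ {d : ℕ} (w : Fin d → ℝ) (a : Fin d → ℤ) : ℝ := ∑ i, w i * (a i : ℝ)

/-- The initial form `init_w(g)` of a Laurent polynomial. -/
noncomputable def initForm {K : Type*} [Field K] {d : ℕ} (w : Fin d → ℝ)
    (g : (Fin d → ℤ) →₀ K) : (Fin d → ℤ) →₀ K :=
  g.filter (fun a => ∀ b ∈ g.support, pairZ w a ≤ pairZ w b)

/-- Evaluation of a Laurent polynomial at a point of the torus over the field
`KK = K{{ε^ℝ}}` of generalized Puiseux series (Hahn series with real exponents). -/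
noncomputable def laurentEval {K : Type*} [Field K] {d : ℕ}
    (ζ : Fin d → HahnSeries ℝ K) (f : AddMonoidAlgebra K (Fin d → ℤ)) : HahnSeries ℝ K :=
  ∑ a ∈ (AMAtoF f).support, HahnSeries.C ((AMAtoF f) a) * ∏ i, (ζ i) ^ (a i)

section Aux

variable {K : Type*} [Field K] {d : ℕ}

lemma trop_order_lc_mul {x y : HahnSeries ℝ K} (hx : x ≠ 0) (hy : y ≠ 0) :
    (x * y).order = x.order + y.order ∧
      (x * y).leadingCoeff = x.leadingCoeff * y.leadingCoeff := by
  have ho := HahnSeries.order_mul hx hy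
  refine ⟨ho, ?_⟩
  rw [HahnSeries.leadingCoeff_eq, ho, HahnSeries.coeff_mul_order_add_order]

lemma trop_order_lc_inv {x : HahnSeries ℝ K} (hx : x ≠ 0) :
    (x⁻¹).order = -x.order ∧ (x⁻¹).leadingCoeff = (x.leadingCoeff)⁻¹ := by
  have hinv : x⁻¹ ≠ 0 := inv_ne_zero hx
  have hmul : x * x⁻¹ = 1 := mul_inv_cancel₀ hx
  have ho : x.order + x⁻¹.order = 0 := by
    rw [← HahnSeries.order_mul hx hinv, hmul, HahnSeries.order_one]
  have hlc : x.leadingCoeff * x⁻¹.leadingCoeff = 1 := by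
    have := HahnSeries.coeff_mul_order_add_order x x⁻¹
    rw [hmul, ho, HahnSeries.coeff_one, if_pos rfl] at this
    exact this.symm
  exact ⟨by linarith, eq_inv_of_mul_eq_one_right hlc⟩

lemma trop_order_lc_pow {x : HahnSeries ℝ K} (hx : x ≠ 0) (n : ℕ) :
    (x ^ n).order = (n : ℝ) * x.order ∧
      (x ^ n).leadingCoeff = x.leadingCoeff ^ n := by
  induction n with
  | zero => simp [HahnSeries.order_one, HahnSeries.leadingCoeff_one]
  | succ n ih =>
    obtain ⟨ho, hl⟩ := ih
    obtain ⟨ho2, hl2⟩ := trop_order_lc_mul (pow_ne_zero n hx) hx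
    constructor
    · rw [pow_succ, ho2, ho]; push_cast; ring
    · rw [pow_succ, hl2, hl, pow_succ]

lemma trop_order_lc_zpow {x : HahnSeries ℝ K} (hx : x ≠ 0) (n : ℤ) :
    (x ^ n).order = (n : ℝ) * x.order ∧
      (x ^ n).leadingCoeff = x.leadingCoeff ^ n := by
  cases n with
  | ofNat n =>
    rw [Int.ofNat_eq_coe, zpow_natCast, zpow_natCast]
    exact_mod_cast trop_order_lc_pow hx n
  | negSucc n =>
    obtain ⟨ho, hl⟩ := trop_order_lc_pow hx (n + 1)
    obtain ⟨ho2, hl2⟩ := trop_order_lc_inv (pow_ne_zero (n + 1) hx)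
    rw [zpow_negSucc, zpow_negSucc]
    constructor
    · rw [ho2, ho, Int.cast_negSucc]; push_cast; ring
    · rw [hl2, hl]

lemma trop_order_lc_prod {ι : Type*} (s : Finset ι) (f : ι → HahnSeries ℝ K) :
    (∀ i ∈ s, f i ≠ 0) →
      (∏ i ∈ s, f i) ≠ 0 ∧ (∏ i ∈ s, f i).order = ∑ i ∈ s, (f i).order ∧
        (∏ i ∈ s, f i).leadingCoeff = ∏ i ∈ s, (f i).leadingCoeff := by
  induction s using Finset.cons_induction with
  | empty =>
    intro _
    simp [HahnSeries.order_one, HahnSeries.leadingCoeff_one]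
  | cons a s ha ih =>
    intro hf
    obtain ⟨h0, ho, hl⟩ := ih (fun i hi => hf i (Finset.mem_cons.mpr (Or.inr hi)))
    have hfa := hf a (Finset.mem_cons_self a s)
    obtain ⟨ho2, hl2⟩ := trop_order_lc_mul hfa h0
    simp only [Finset.prod_cons, Finset.sum_cons]
    exact ⟨mul_ne_zero hfa h0, by rw [ho2, ho], by rw [hl2, hl]⟩

lemma trop_sum_coeff {ι : Type*} (s : Finset ι) (f : ι → HahnSeries ℝ K) (m : ℝ) :
    (∑ i ∈ s, f i).coeff m = ∑ i ∈ s, (f i).coeff m := by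
  induction s using Finset.cons_induction with
  | empty => simp
  | cons a s ha ih => rw [Finset.sum_cons, Finset.sum_cons, HahnSeries.coeff_add, ih]

/-- The character of the torus given by a point `c` of `(K*)^d`. -/
noncomputable def tropPhi (c : Fin d → K) (hc : ∀ i, c i ≠ 0) :
    Multiplicative (Fin d → ℤ) →* K where
  toFun a := ∏ i, c i ^ (Multiplicative.toAdd a i)
  map_one' := by
    refine Finset.prod_eq_one fun i _ => ?_
    rw [toAdd_one, Pi.zero_apply, zpow_zero]
  map_mul' a b := by
    show ∏ i, c i ^ (Multiplicative.toAdd (a * b) i) =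
      (∏ i, c i ^ (Multiplicative.toAdd a i)) * ∏ i, c i ^ (Multiplicative.toAdd b i)
    rw [← Finset.prod_mul_distrib]
    refine Finset.prod_congr rfl fun i _ => ?_
    exact zpow_add₀ (hc i) _ _

/-- Evaluation at a point `c` of the torus `(K*)^d`, as an algebra homomorphism. -/
noncomputable def tropEvalHom (c : Fin d → K) (hc : ∀ i, c i ≠ 0) :
    AddMonoidAlgebra K (Fin d → ℤ) →ₐ[K] K :=
  AddMonoidAlgebra.lift K K (Fin d → ℤ) (tropPhi c hc)

lemma tropEvalHom_apply (c : Fin d → K) (hc : ∀ i, c i ≠ 0)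
    (f : AddMonoidAlgebra K (Fin d → ℤ)) :
    tropEvalHom c hc f = ∑ a ∈ (AMAtoF f).support, (AMAtoF f) a * ∏ i, c i ^ (a i) := by
  rw [tropEvalHom, AddMonoidAlgebra.lift_apply]
  rfl

lemma trop_eval_initForm_eq_zero (ζ : Fin d → HahnSeries ℝ K) (hζ : ∀ i, ζ i ≠ 0)
    (w : Fin d → ℝ) (hw : ∀ i, (ζ i).order = w i)
    (h : AddMonoidAlgebra K (Fin d → ℤ)) (hh : h ≠ 0) (hz : laurentEval ζ h = 0) :
    tropEvalHom (fun i => (ζ i).leadingCoeff)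
      (fun i => HahnSeries.leadingCoeff_ne_zero.mpr (hζ i))
      (AddMonoidAlgebra.ofCoeff (initForm w (AMAtoF h))) = 0 := by
  have hc : ∀ i, (ζ i).leadingCoeff ≠ 0 := fun i => HahnSeries.leadingCoeff_ne_zero.mpr (hζ i)
  have hFne : (AMAtoF h).support.Nonempty := Finsupp.support_nonempty_iff.mpr
    (fun e => hh (AddMonoidAlgebra.coeff_inj.mp
      (show h.coeff = (0 : AddMonoidAlgebra K (Fin d → ℤ)).coeff from e)))
  have hTne : ((AMAtoF h).support.image (pairZ w)).Nonempty := hFne.image _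
  set m : ℝ := ((AMAtoF h).support.image (pairZ w)).min' hTne with hm
  have hmin : ∀ a ∈ (AMAtoF h).support, m ≤ pairZ w a := fun a ha =>
    Finset.min'_le _ _ (Finset.mem_image_of_mem _ ha)
  have key : ∀ a ∈ (AMAtoF h).support,
      ((∀ b ∈ (AMAtoF h).support, pairZ w a ≤ pairZ w b) ↔ pairZ w a = m) := by
    intro a ha
    constructor
    · intro hall
      obtain ⟨b, hb, hbm⟩ :=
        Finset.mem_image.mp (((AMAtoF h).support.image (pairZ w)).min'_mem hTne)
      exact le_antisymm (le_trans (hall b hb) (le_of_eq hbm)) (hmin a ha)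
    · intro heq b hb
      exact heq ▸ hmin b hb
  have hPfacts : ∀ a : Fin d → ℤ, (∏ i, (ζ i) ^ (a i)) ≠ 0 ∧
      (∏ i, (ζ i) ^ (a i)).order = pairZ w a ∧
      (∏ i, (ζ i) ^ (a i)).leadingCoeff = ∏ i, (ζ i).leadingCoeff ^ (a i) := by
    intro a
    obtain ⟨h0, ho, hl⟩ := trop_order_lc_prod Finset.univ (fun i => (ζ i) ^ (a i))
      (fun i _ => zpow_ne_zero _ (hζ i))
    refine ⟨h0, ?_, ?_⟩
    · rw [ho]
      unfold pairZ
      refine Finset.sum_congr rfl fun i _ => ?_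
      rw [(trop_order_lc_zpow (hζ i) (a i)).1, hw i, mul_comm]
    · rw [hl]
      exact Finset.prod_congr rfl fun i _ => (trop_order_lc_zpow (hζ i) (a i)).2
  have hcoeff : ∀ a ∈ (AMAtoF h).support,
      (HahnSeries.C ((AMAtoF h) a) * ∏ i, (ζ i) ^ (a i)).coeff m =
        if pairZ w a = m then (AMAtoF h) a * ∏ i, (ζ i).leadingCoeff ^ (a i) else 0 := by
    intro a ha
    obtain ⟨h0, ho, hl⟩ := hPfacts a
    rw [HahnSeries.C_mul_eq_smul, HahnSeries.coeff_smul, smul_eq_mul]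
    by_cases hcase : pairZ w a = m
    · rw [if_pos hcase]
      congr 1
      rw [← hl, HahnSeries.leadingCoeff_eq, ho, hcase]
    · rw [if_neg hcase]
      have hlt : m < (∏ i, (ζ i) ^ (a i)).order := by
        rw [ho]
        exact lt_of_le_of_ne (hmin a ha) (Ne.symm hcase)
      rw [HahnSeries.coeff_eq_zero_of_lt_order hlt, mul_zero]
  have hsum : (0 : K) = ∑ a ∈ (AMAtoF h).support,
      (if pairZ w a = m then (AMAtoF h) a * ∏ i, (ζ i).leadingCoeff ^ (a i) else 0) := by
    have h0 : (laurentEval ζ h).coeff m = 0 := by rw [hz]; exact HahnSeries.coeff_zero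
    rw [laurentEval, trop_sum_coeff] at h0
    exact h0.symm.trans (Finset.sum_congr rfl hcoeff)
  rw [tropEvalHom_apply]
  have hsupp : (AMAtoF (AddMonoidAlgebra.ofCoeff (initForm w (AMAtoF h)))).support =
      (AMAtoF h).support.filter (fun a => pairZ w a = m) := by
    show (initForm w (AMAtoF h)).support = _
    rw [initForm, Finsupp.support_filter]
    exact Finset.filter_congr (fun a ha => by
      exact key a ha)
  rw [hsupp]
  have hcongr : ∑ a ∈ (AMAtoF h).support.filter (fun a => pairZ w a = m),
      (AMAtoF (AddMonoidAlgebra.ofCoeff (initForm w (AMAtoF h)))) a * ∏ i, (ζ i).leadingCoeff ^ (a i) =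
      ∑ a ∈ (AMAtoF h).support.filter (fun a => pairZ w a = m),
        (AMAtoF h) a * ∏ i, (ζ i).leadingCoeff ^ (a i) := by
    refine Finset.sum_congr rfl fun a ha => ?_
    have ha' := Finset.mem_filter.mp ha
    congr 1
    show (initForm w (AMAtoF h)) a = (AMAtoF h) a
    rw [initForm, Finsupp.filter_apply_pos]
    exact (key a ha'.1).mpr ha'.2
  rw [hcongr, Finset.sum_filter, ← hsum]

end Aux

/-- one direction of the Fundamental Theorem of Tropical Geometry:
if the initial ideal `init_w(I)` contains a monomial, then no common zero `ζ` of `I`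
with coordinates in the nonzero generalized Puiseux series has `val(ζ) = w`. -/
theorem stmt3 {K : Type*} [Field K] [IsAlgClosed K] [CharZero K] {d : ℕ}
    (I : Ideal (AddMonoidAlgebra K (Fin d → ℤ))) (w : Fin d → ℝ)
    (hmono : ∃ (a : Fin d → ℤ) (g : AddMonoidAlgebra K (Fin d → ℤ)),
      AMAtoF g = Finsupp.single a (1 : K) ∧
      g ∈ Ideal.span {g' : AddMonoidAlgebra K (Fin d → ℤ) |
        ∃ h ∈ I, h ≠ 0 ∧ AMAtoF g' = initForm w (AMAtoF h)})
    (ζ : Fin d → HahnSeries ℝ K) (hζ : ∀ i, ζ i ≠ 0)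
    (hzero : ∀ h ∈ I, laurentEval ζ h = 0) :
    (fun i => (ζ i).order) ≠ w := by
  intro heq
  obtain ⟨a, g, hg, hgspan⟩ := hmono
  have hw : ∀ i, (ζ i).order = w i := fun i => congrFun heq i
  set c : Fin d → K := fun i => (ζ i).leadingCoeff with hcdef
  have hc : ∀ i, c i ≠ 0 := fun i => HahnSeries.leadingCoeff_ne_zero.mpr (hζ i)
  set ev := tropEvalHom c hc with hev
  have hker : Ideal.span {g' : AddMonoidAlgebra K (Fin d → ℤ) |
        ∃ h ∈ I, h ≠ 0 ∧ AMAtoF g' = initForm w (AMAtoF h)} ≤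
      RingHom.ker ev.toRingHom := by
    rw [Ideal.span_le]
    rintro g' ⟨h, hI, hne, hgf⟩
    have hg' : g' = AddMonoidAlgebra.ofCoeff (initForm w (AMAtoF h)) :=
      AddMonoidAlgebra.coeff_inj.mp hgf
    simp only [SetLike.mem_coe, RingHom.mem_ker, AlgHom.toRingHom_eq_coe,
      RingHom.coe_coe]
    rw [hg']
    exact trop_eval_initForm_eq_zero ζ hζ w hw h hne (hzero h hI)
  have h1 : ev g = 0 := by
    have := hker hgspan
    simpa only [RingHom.mem_ker, AlgHom.toRingHom_eq_coe, RingHom.coe_coe] using this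
  have h2 : ev g = ∏ i, c i ^ (a i) := by
    have hg2 : g = AddMonoidAlgebra.ofCoeff (Finsupp.single a (1 : K)) :=
      AddMonoidAlgebra.coeff_inj.mp hg
    rw [hg2, hev, tropEvalHom_apply]
    have hsupp : (AMAtoF (AddMonoidAlgebra.ofCoeff (Finsupp.single a (1 : K)))).support = {a} :=
      Finsupp.support_single_ne_zero a one_ne_zero
    rw [hsupp, Finset.sum_singleton]
    show (Finsupp.single a (1 : K)) a * _ = _
    rw [Finsupp.single_eq_same, one_mul]
  have h3 : (∏ i, c i ^ (a i)) ≠ 0 :=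
    Finset.prod_ne_zero_iff.mpr (fun i _ => zpow_ne_zero _ (hc i))
  exact h3 (h2 ▸ h1)
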